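/- arXiv:1307.8332 — 5 statements merged into one kernel-verified Lean document; each statement's English description precedes it below -/
import Mathlib

section
/- If (H₁, Q₁) and (H₂, Q₂) both solve the Neumann spectral problem, and Q₁ and Q₂ are both strictly positive on Θ, then H₁ = H₂. (Uniqueness of the principal eigenvalue among eigenvalues with positive eigenfunctions.) -/
/-- If `(H₁, Q₁)` and `(H₂, Q₂)` both solve the Neumann spectral
problem on `Θ = [θm, θM]` with strictly positive eigenfunctions, then `H₁ = H₂`. -/
theorem stmt_3 (θm θM α r H₁ H₂ : ℝ) (a Q₁ Q₂ : ℝ → ℝ)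
    (hθ : θm < θM) (hα : 0 < α) (hr : 0 < r)
    (ha : ContinuousOn a (Set.Icc θm θM))
    (hQ₁reg : ∃ U : Set ℝ, IsOpen U ∧ Set.Icc θm θM ⊆ U ∧ ContDiffOn ℝ 2 Q₁ U)
    (heq₁ : ∀ θ ∈ Set.Icc θm θM, α * deriv (deriv Q₁) θ + r * a θ * Q₁ θ = H₁ * Q₁ θ)
    (hbm₁ : deriv Q₁ θm = 0) (hbM₁ : deriv Q₁ θM = 0)
    (hpos₁ : ∀ θ ∈ Set.Icc θm θM, 0 < Q₁ θ)
    (hQ₂reg : ∃ U : Set ℝ, IsOpen U ∧ Set.Icc θm θM ⊆ U ∧ ContDiffOn ℝ 2 Q₂ U)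
    (heq₂ : ∀ θ ∈ Set.Icc θm θM, α * deriv (deriv Q₂) θ + r * a θ * Q₂ θ = H₂ * Q₂ θ)
    (hbm₂ : deriv Q₂ θm = 0) (hbM₂ : deriv Q₂ θM = 0)
    (hpos₂ : ∀ θ ∈ Set.Icc θm θM, 0 < Q₂ θ) :
    H₁ = H₂ := by
  obtain ⟨U₁, hU₁o, hU₁s, hQ₁⟩ := hQ₁reg
  obtain ⟨U₂, hU₂o, hU₂s, hQ₂⟩ := hQ₂reg
  set U := U₁ ∩ U₂ with hUdef
  have hUo : IsOpen U := hU₁o.inter hU₂o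
  have hUs : Set.Icc θm θM ⊆ U := Set.subset_inter hU₁s hU₂s
  have h1 : ContDiffOn ℝ 2 Q₁ U := hQ₁.mono Set.inter_subset_left
  have h2 : ContDiffOn ℝ 2 Q₂ U := hQ₂.mono Set.inter_subset_right
  have h1' : ContDiffOn ℝ 1 (deriv Q₁) U :=
    h1.deriv_of_isOpen (m := 1) hUo (by norm_num)
  have h2' : ContDiffOn ℝ 1 (deriv Q₂) U :=
    h2.deriv_of_isOpen (m := 1) hUo (by norm_num)
  have hd1 : ∀ θ ∈ U, HasDerivAt Q₁ (deriv Q₁ θ) θ := fun θ hθU =>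
    ((h1.differentiableOn (by norm_num)).differentiableAt (hUo.mem_nhds hθU)).hasDerivAt
  have hd2 : ∀ θ ∈ U, HasDerivAt Q₂ (deriv Q₂ θ) θ := fun θ hθU =>
    ((h2.differentiableOn (by norm_num)).differentiableAt (hUo.mem_nhds hθU)).hasDerivAt
  have hdd1 : ∀ θ ∈ U, HasDerivAt (deriv Q₁) (deriv (deriv Q₁) θ) θ := fun θ hθU =>
    ((h1'.differentiableOn (by norm_num)).differentiableAt (hUo.mem_nhds hθU)).hasDerivAt
  have hdd2 : ∀ θ ∈ U, HasDerivAt (deriv Q₂) (deriv (deriv Q₂) θ) θ := fun θ hθU =>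
    ((h2'.differentiableOn (by norm_num)).differentiableAt (hUo.mem_nhds hθU)).hasDerivAt
  set W : ℝ → ℝ := fun θ => deriv Q₁ θ * Q₂ θ - deriv Q₂ θ * Q₁ θ with hWdef
  set f : ℝ → ℝ := fun θ => (H₁ - H₂) / α * (Q₁ θ * Q₂ θ) with hfdef
  have hWderiv : ∀ θ ∈ Set.Icc θm θM, HasDerivAt W (f θ) θ := by
    intro θ hθI
    have hθU := hUs hθI
    have hW' : HasDerivAt W
        (deriv (deriv Q₁) θ * Q₂ θ + deriv Q₁ θ * deriv Q₂ θ -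
          (deriv (deriv Q₂) θ * Q₁ θ + deriv Q₂ θ * deriv Q₁ θ)) θ :=
      ((hdd1 θ hθU).mul (hd2 θ hθU)).sub ((hdd2 θ hθU).mul (hd1 θ hθU))
    convert hW' using 1
    have e1 := heq₁ θ hθI
    have e2 := heq₂ θ hθI
    have hα' : α ≠ 0 := ne_of_gt hα
    simp only [hfdef]
    field_simp
    linear_combination Q₁ θ * e2 - Q₂ θ * e1
  have hQcont : ContinuousOn (fun θ => Q₁ θ * Q₂ θ) (Set.Icc θm θM) :=
    ((h1.continuousOn.mono hUs).mul (h2.continuousOn.mono hUs))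
  have hQint : IntervalIntegrable (fun θ => Q₁ θ * Q₂ θ) MeasureTheory.volume θm θM :=
    (hQcont.mono (by rw [Set.uIcc_of_le hθ.le])).intervalIntegrable
  have hfint : IntervalIntegrable f MeasureTheory.volume θm θM := hQint.const_mul _
  have hFTC : ∫ θ in θm..θM, f θ = W θM - W θm := by
    apply intervalIntegral.integral_eq_sub_of_hasDerivAt
    · intro θ hθI
      exact hWderiv θ (by rwa [Set.uIcc_of_le hθ.le] at hθI)
    · exact hfint
  have hWm : W θm = 0 := by simp [hWdef, hbm₁, hbm₂]
  have hWM : W θM = 0 := by simp [hWdef, hbM₁, hbM₂]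
  have hint0 : (H₁ - H₂) / α * ∫ θ in θm..θM, Q₁ θ * Q₂ θ = 0 := by
    rw [← intervalIntegral.integral_const_mul]
    rw [hFTC, hWm, hWM, sub_zero]
  have hintpos : 0 < ∫ θ in θm..θM, Q₁ θ * Q₂ θ := by
    apply intervalIntegral.intervalIntegral_pos_of_pos_on hQint _ hθ
    intro x hx
    have hx' : x ∈ Set.Icc θm θM := Set.mem_Icc_of_Ioo hx
    exact mul_pos (hpos₁ x hx') (hpos₂ x hx')
  have : (H₁ - H₂) / α = 0 := by
    rcases mul_eq_zero.mp hint0 with h | h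
    · exact h
    · exact absurd h (ne_of_gt hintpos)
  have := (div_eq_zero_iff.mp this).resolve_right (ne_of_gt hα)
  linarith
end

section
/- Suppose a is strictly concave on Θ and (H, Q) solves the Neumann spectral problem with Q strictly positive on Θ. Then Q attains its maximum over Θ at exactly one point: there exists a unique θ̄ ∈ Θ such that Q(θ̄) = max_{θ ∈ Θ} Q(θ). -/
open Set Filter

/-- If `f` has positive derivative at `x`, then `f x < f y` for `y` slightly to the right. -/
lemma aux_ev_right {f : ℝ → ℝ} {c x : ℝ} (hf : HasDerivAt f c x) (hc : 0 < c) :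
    ∀ᶠ y in nhdsWithin x (Set.Ioi x), f x < f y := by
  have h := hasDerivAt_iff_tendsto_slope.1 hf
  have h2 : ∀ᶠ y in nhdsWithin x {x}ᶜ, 0 < slope f x y := h.eventually (eventually_gt_nhds hc)
  have h3 : ∀ᶠ y in nhdsWithin x (Set.Ioi x), 0 < slope f x y :=
    h2.filter_mono (nhdsWithin_mono x fun y hy => ne_of_gt hy)
  filter_upwards [h3, self_mem_nhdsWithin] with y hy hy2
  have hy2' : x < y := hy2
  rw [slope_def_field] at hy
  have hyx : 0 < y - x := sub_pos.2 hy2'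
  have := mul_pos hy hyx
  rw [div_mul_cancel₀ _ (ne_of_gt hyx)] at this
  linarith

/-- If `f` has positive derivative at `x`, then `f y < f x` for `y` slightly to the left. -/
lemma aux_ev_left {f : ℝ → ℝ} {c x : ℝ} (hf : HasDerivAt f c x) (hc : 0 < c) :
    ∀ᶠ y in nhdsWithin x (Set.Iio x), f y < f x := by
  have h := hasDerivAt_iff_tendsto_slope.1 hf
  have h2 : ∀ᶠ y in nhdsWithin x {x}ᶜ, 0 < slope f x y := h.eventually (eventually_gt_nhds hc)
  have h3 : ∀ᶠ y in nhdsWithin x (Set.Iio x), 0 < slope f x y :=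
    h2.filter_mono (nhdsWithin_mono x fun y hy => ne_of_lt hy)
  filter_upwards [h3, self_mem_nhdsWithin] with y hy hy2
  have hy2' : y < x := hy2
  rw [slope_def_field] at hy
  have hyx : y - x < 0 := sub_neg.2 hy2'
  have := mul_neg_of_pos_of_neg hy hyx
  rw [div_mul_cancel₀ _ (ne_of_lt hyx)] at this
  linarith

/-- Key lemma: there cannot be two distinct maximum points. -/
lemma aux_no_two_max (θm θM α r H : ℝ) (a Q : ℝ → ℝ)
    (hθ : θm < θM) (hα : 0 < α) (hr : 0 < r)
    (hconc : StrictConcaveOn ℝ (Set.Icc θm θM) a)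
    (hQreg : ∃ U : Set ℝ, IsOpen U ∧ Set.Icc θm θM ⊆ U ∧ ContDiffOn ℝ 2 Q U)
    (heq : ∀ θ ∈ Set.Icc θm θM, α * deriv (deriv Q) θ + r * a θ * Q θ = H * Q θ)
    (hbm : deriv Q θm = 0) (hbM : deriv Q θM = 0)
    (hpos : ∀ θ ∈ Set.Icc θm θM, 0 < Q θ)
    {x y : ℝ} (hx : x ∈ Set.Icc θm θM) (hy : y ∈ Set.Icc θm θM)
    (hxy : x < y)
    (hmx : ∀ θ ∈ Set.Icc θm θM, Q θ ≤ Q x)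
    (hmy : ∀ θ ∈ Set.Icc θm θM, Q θ ≤ Q y) : False := by
  obtain ⟨U, hUopen, hUsub, hQU⟩ := hQreg
  have hQU' : ContDiffOn ℝ (1 + 1) Q U := by norm_num; exact hQU
  obtain ⟨hQdiff, -, hQ1⟩ := (contDiffOn_succ_iff_deriv_of_isOpen hUopen).1 hQU'
  have hQcont : ContinuousOn Q U := hQU.continuousOn
  have hQ'cont : ContinuousOn (deriv Q) U := hQ1.continuousOn
  have hQ'diff : DifferentiableOn ℝ (deriv Q) U := hQ1.differentiableOn one_ne_zero
  have hd2 : ∀ t ∈ U, HasDerivAt (deriv Q) (deriv (deriv Q) t) t := fun t ht =>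
    ((hQ'diff t ht).differentiableAt (hUopen.mem_nhds ht)).hasDerivAt
  -- deriv Q vanishes at any max point
  have hderiv0 : ∀ z ∈ Set.Icc θm θM, (∀ θ ∈ Set.Icc θm θM, Q θ ≤ Q z) → deriv Q z = 0 := by
    intro z hz hmax
    rcases eq_or_lt_of_le hz.1 with h1 | h1
    · rw [← h1]; exact hbm
    rcases eq_or_lt_of_le hz.2 with h2 | h2
    · rw [h2]; exact hbM
    have hnhds : Set.Icc θm θM ∈ nhds z := Icc_mem_nhds h1 h2
    have hloc : IsLocalMax Q z := by
      have : IsMaxOn Q (Set.Icc θm θM) z := fun t ht => hmax t ht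
      exact this.isLocalMax hnhds
    exact hloc.deriv_eq_zero
  have hQ'x : deriv Q x = 0 := hderiv0 x hx hmx
  have hQ'y : deriv Q y = 0 := hderiv0 y hy hmy
  -- second derivative is ≤ 0 at x (using the right neighbourhood; x < θM)
  have hxM : x < θM := lt_of_lt_of_le hxy hy.2
  have hymm : θm < y := lt_of_le_of_lt hx.1 hxy
  have hQ''x : deriv (deriv Q) x ≤ 0 := by
    by_contra hcon
    push_neg at hcon
    have hev := aux_ev_right (hd2 x (hUsub hx)) hcon
    rw [hQ'x] at hev
    have hev2 : ∀ᶠ t in nhdsWithin x (Set.Ioi x), 0 < deriv Q t ∧ t < θM := by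
      refine hev.and (eventually_nhdsWithin_of_eventually_nhds ?_)
      exact eventually_lt_nhds hxM
    obtain ⟨u, hu, hsub⟩ := mem_nhdsGT_iff_exists_Ioc_subset.1 hev2
    have hu' : x < u := hu
    have huIcc : u ∈ Set.Ioc x u := ⟨hu', le_rfl⟩
    have huM : u < θM := (hsub huIcc).2
    have hIccsub : Set.Icc x u ⊆ Set.Icc θm θM := Set.Icc_subset_Icc hx.1 huM.le
    have hmono : StrictMonoOn Q (Set.Icc x u) := by
      apply strictMonoOn_of_deriv_pos (convex_Icc x u)
      · exact hQcont.mono (hIccsub.trans hUsub)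
      · intro t ht
        rw [interior_Icc] at ht
        exact (hsub ⟨ht.1, ht.2.le⟩).1
    have : Q x < Q u := hmono ⟨le_rfl, hu'.le⟩ ⟨hu'.le, le_rfl⟩ hu'
    have : Q u ≤ Q x := hmx u ⟨hx.1.trans hu'.le, huM.le⟩
    linarith
  -- second derivative is ≤ 0 at y (using the left neighbourhood; θm < y)
  have hQ''y : deriv (deriv Q) y ≤ 0 := by
    by_contra hcon
    push_neg at hcon
    have hev := aux_ev_left (hd2 y (hUsub hy)) hcon
    rw [hQ'y] at hev
    have hev2 : ∀ᶠ t in nhdsWithin y (Set.Iio y), deriv Q t < 0 ∧ θm < t := by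
      refine hev.and (eventually_nhdsWithin_of_eventually_nhds ?_)
      exact eventually_gt_nhds hymm
    obtain ⟨u, hu, hsub⟩ := mem_nhdsLT_iff_exists_Ico_subset.1 hev2
    have hu' : u < y := hu
    have huIco : u ∈ Set.Ico u y := ⟨le_rfl, hu'⟩
    have hum : θm < u := (hsub huIco).2
    have hIccsub : Set.Icc u y ⊆ Set.Icc θm θM := Set.Icc_subset_Icc hum.le hy.2
    have hanti : StrictAntiOn Q (Set.Icc u y) := by
      apply strictAntiOn_of_deriv_neg (convex_Icc u y)
      · exact hQcont.mono (hIccsub.trans hUsub)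
      · intro t ht
        rw [interior_Icc] at ht
        exact (hsub ⟨ht.1.le, ht.2⟩).1
    have : Q y < Q u := hanti ⟨le_rfl, hu'.le⟩ ⟨hu'.le, le_rfl⟩ hu'
    have : Q u ≤ Q y := hmy u ⟨hum.le, hu'.le.trans hy.2⟩
    linarith
  -- hence H - r * a ≤ 0 at x and y
  have hcx : H - r * a x ≤ 0 := by
    have h1 := heq x hx
    have h2 := hpos x hx
    nlinarith
  have hcy : H - r * a y ≤ 0 := by
    have h1 := heq y hy
    have h2 := hpos y hy
    nlinarith
  -- strict concavity: H - r * a < 0 on (x, y), hence Q'' < 0 there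
  have hQ''neg : ∀ t ∈ Set.Ioo x y, deriv (deriv Q) t < 0 := by
    intro t ht
    obtain ⟨lam, mu, hlam, hmu, hsum, hcomb⟩ := (Convex.mem_Ioo hxy).1 ht
    have hxne : x ≠ y := ne_of_lt hxy
    have hstrict := hconc.2 hx hy hxne hlam hmu hsum
    simp only [smul_eq_mul] at hstrict
    rw [hcomb] at hstrict
    have hca : H - r * a t < 0 := by
      have h1 : lam * H ≤ lam * (r * a x) := mul_le_mul_of_nonneg_left (by linarith) hlam.le
      have h2 : mu * H ≤ mu * (r * a y) := mul_le_mul_of_nonneg_left (by linarith) hmu.le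
      have h3 : r * (lam * a x + mu * a y) < r * a t := mul_lt_mul_of_pos_left hstrict hr
      have hH : lam * H + mu * H = H := by
        calc lam * H + mu * H = (lam + mu) * H := by ring
          _ = 1 * H := by rw [hsum]
          _ = H := one_mul H
      nlinarith [h1, h2, h3, hH]
    have htIcc : t ∈ Set.Icc θm θM := ⟨hx.1.trans ht.1.le, ht.2.le.trans hy.2⟩
    have h1 := heq t htIcc
    have h2 := hpos t htIcc
    nlinarith
  -- deriv Q is strictly decreasing on [x, y], contradicting Q'(x) = Q'(y) = 0
  have hIccsub : Set.Icc x y ⊆ Set.Icc θm θM := Set.Icc_subset_Icc hx.1 hy.2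
  have hanti : StrictAntiOn (deriv Q) (Set.Icc x y) := by
    apply strictAntiOn_of_deriv_neg (convex_Icc x y)
    · exact hQ'cont.mono (hIccsub.trans hUsub)
    · intro t ht
      rw [interior_Icc] at ht
      exact hQ''neg t ht
  have : deriv Q y < deriv Q x := hanti ⟨le_rfl, hxy.le⟩ ⟨hxy.le, le_rfl⟩ hxy
  rw [hQ'x, hQ'y] at this
  exact lt_irrefl 0 this

/-- If `a` is strictly concave on `Θ = [θm, θM]` and `(H, Q)` solves
the Neumann spectral problem with `Q > 0` on `Θ`, then `Q` attains its maximum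
over `Θ` at exactly one point. -/
theorem stmt_5 (θm θM α r H : ℝ) (a Q : ℝ → ℝ)
    (hθ : θm < θM) (hα : 0 < α) (hr : 0 < r)
    (ha : ContinuousOn a (Set.Icc θm θM))
    (hconc : StrictConcaveOn ℝ (Set.Icc θm θM) a)
    (hQreg : ∃ U : Set ℝ, IsOpen U ∧ Set.Icc θm θM ⊆ U ∧ ContDiffOn ℝ 2 Q U)
    (heq : ∀ θ ∈ Set.Icc θm θM, α * deriv (deriv Q) θ + r * a θ * Q θ = H * Q θ)
    (hbm : deriv Q θm = 0) (hbM : deriv Q θM = 0)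
    (hpos : ∀ θ ∈ Set.Icc θm θM, 0 < Q θ) :
    ∃! θbar : ℝ, θbar ∈ Set.Icc θm θM ∧ ∀ θ ∈ Set.Icc θm θM, Q θ ≤ Q θbar := by
  obtain ⟨U, hUopen, hUsub, hQU⟩ := hQreg
  have hQcont : ContinuousOn Q (Set.Icc θm θM) := hQU.continuousOn.mono hUsub
  obtain ⟨θbar, hmem, hmax⟩ := isCompact_Icc.exists_isMaxOn
    (Set.nonempty_Icc.2 hθ.le) hQcont
  refine ⟨θbar, ⟨hmem, fun θ hθ' => hmax hθ'⟩, ?_⟩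
  rintro z ⟨hzmem, hzmax⟩
  by_contra hne
  rcases lt_or_gt_of_ne hne with h | h
  · exact aux_no_two_max θm θM α r H a Q hθ hα hr hconc ⟨U, hUopen, hUsub, hQU⟩
      heq hbm hbM hpos hzmem hmem h hzmax (fun θ hθ' => hmax hθ')
  · exact aux_no_two_max θm θM α r H a Q hθ hα hr hconc ⟨U, hUopen, hUsub, hQU⟩
      heq hbm hbM hpos hmem hzmem h (fun θ hθ' => hmax hθ') hzmax
end

section
/- Suppose (H, Q) solves the Neumann spectral problem with Q strictly positive on Θ, and suppose there is θ̂ ∈ Θ such that H − r a(θ) > 0 for all θ ∈ [θ_m, θ̂) and H − r a(θ) ≤ 0 for all θ ∈ [θ̂, θ_M]. Then Q is nondecreasing on Θ; in particular Q attains its maximum over Θ at θ_M. -/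
/-- If `(H, Q)` solves the Neumann spectral problem with `Q > 0` on
`Θ = [θm, θM]`, and `H - r a > 0` on `[θm, θ̂)` while `H - r a ≤ 0` on `[θ̂, θM]`
for some `θ̂ ∈ Θ`, then `Q` is nondecreasing on `Θ`; in particular its maximum
over `Θ` is attained at `θM`. -/
theorem stmt_6 (θm θM α r H θhat : ℝ) (a Q : ℝ → ℝ)
    (hθ : θm < θM) (hα : 0 < α) (hr : 0 < r)
    (ha : ContinuousOn a (Set.Icc θm θM))
    (hQreg : ∃ U : Set ℝ, IsOpen U ∧ Set.Icc θm θM ⊆ U ∧ ContDiffOn ℝ 2 Q U)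
    (heq : ∀ θ ∈ Set.Icc θm θM, α * deriv (deriv Q) θ + r * a θ * Q θ = H * Q θ)
    (hbm : deriv Q θm = 0) (hbM : deriv Q θM = 0)
    (hpos : ∀ θ ∈ Set.Icc θm θM, 0 < Q θ)
    (hθhat : θhat ∈ Set.Icc θm θM)
    (hsign₁ : ∀ θ ∈ Set.Ico θm θhat, 0 < H - r * a θ)
    (hsign₂ : ∀ θ ∈ Set.Icc θhat θM, H - r * a θ ≤ 0) :
    MonotoneOn Q (Set.Icc θm θM) ∧ ∀ θ ∈ Set.Icc θm θM, Q θ ≤ Q θM := by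
  obtain ⟨U, hUopen, hUsub, hQ2⟩ := hQreg
  have hQdiff : DifferentiableOn ℝ Q U := hQ2.differentiableOn (by norm_num)
  have hQ'cd : ContDiffOn ℝ 1 (deriv Q) U :=
    hQ2.deriv_of_isOpen hUopen (by norm_num)
  have hQ'diff : DifferentiableOn ℝ (deriv Q) U := hQ'cd.differentiableOn one_ne_zero
  have hQ'cont : ContinuousOn (deriv Q) U := hQ'diff.continuousOn
  -- formula for second derivative
  have hQ'' : ∀ θ ∈ Set.Icc θm θM, deriv (deriv Q) θ = (H - r * a θ) * Q θ / α := by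
    intro θ hθ'
    have h := heq θ hθ'
    field_simp
    linarith
  -- deriv Q monotone on [θm, θhat]
  have mono1 : MonotoneOn (deriv Q) (Set.Icc θm θhat) := by
    apply monotoneOn_of_deriv_nonneg (convex_Icc _ _)
    · exact hQ'cont.mono (fun x hx => hUsub ⟨hx.1, hx.2.trans hθhat.2⟩)
    · intro x hx
      rw [interior_Icc] at hx
      exact (hQ'diff.differentiableAt (hUopen.mem_nhds
        (hUsub ⟨hx.1.le, hx.2.le.trans hθhat.2⟩))).differentiableWithinAt
    · intro x hx
      rw [interior_Icc] at hx
      have hxI : x ∈ Set.Icc θm θM := ⟨hx.1.le, hx.2.le.trans hθhat.2⟩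
      rw [hQ'' x hxI]
      have h1 := hsign₁ x ⟨hx.1.le, hx.2⟩
      have h2 := hpos x hxI
      positivity
  -- deriv Q antitone on [θhat, θM]
  have anti1 : AntitoneOn (deriv Q) (Set.Icc θhat θM) := by
    apply antitoneOn_of_deriv_nonpos (convex_Icc _ _)
    · exact hQ'cont.mono (fun x hx => hUsub ⟨hθhat.1.trans hx.1, hx.2⟩)
    · intro x hx
      rw [interior_Icc] at hx
      exact (hQ'diff.differentiableAt (hUopen.mem_nhds
        (hUsub ⟨hθhat.1.trans hx.1.le, hx.2.le⟩))).differentiableWithinAt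
    · intro x hx
      rw [interior_Icc] at hx
      have hxI : x ∈ Set.Icc θm θM := ⟨hθhat.1.trans hx.1.le, hx.2.le⟩
      rw [hQ'' x hxI]
      have h1 := hsign₂ x ⟨hx.1.le, hx.2.le⟩
      have h2 := (hpos x hxI).le
      have : (H - r * a x) * Q x ≤ 0 := mul_nonpos_of_nonpos_of_nonneg h1 h2
      exact div_nonpos_of_nonpos_of_nonneg this hα.le
  -- deriv Q nonneg on [θm, θM]
  have hQ'nonneg : ∀ θ ∈ Set.Icc θm θM, 0 ≤ deriv Q θ := by
    intro θ hθ'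
    rcases le_or_gt θ θhat with h | h
    · have := mono1 (Set.left_mem_Icc.2 (hθ'.1.trans h)) ⟨hθ'.1, h⟩ hθ'.1
      rwa [hbm] at this
    · have := anti1 ⟨h.le, hθ'.2⟩ (Set.right_mem_Icc.2 (h.le.trans hθ'.2)) hθ'.2
      rwa [hbM] at this
  have hmono : MonotoneOn Q (Set.Icc θm θM) := by
    apply monotoneOn_of_deriv_nonneg (convex_Icc _ _)
    · exact (hQdiff.continuousOn).mono hUsub
    · intro x hx
      rw [interior_Icc] at hx
      exact (hQdiff.differentiableAt (hUopen.mem_nhds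
        (hUsub ⟨hx.1.le, hx.2.le⟩))).differentiableWithinAt
    · intro x hx
      rw [interior_Icc] at hx
      exact hQ'nonneg x ⟨hx.1.le, hx.2.le⟩
  exact ⟨hmono, fun θ hθ' => hmono hθ' (Set.right_mem_Icc.2 hθ.le) hθ'.2⟩
end

section
/- Define z : (0, ∞) → ℝ by z(t) = ε/(2√(α t)) + (r b_∞ ε²/(α γ))^{1/3}. Then z is differentiable on (0, ∞) and, for every t > 0, z'(t) + (2α/ε²) z(t)³ ≥ r b_∞/(2γ). (The barrier function z is a supersolution of the Bernstein-type ODE used in the Lipschitz estimate.) -/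
/-- The barrier function `z(t) = ε/(2√(αt)) + (r b∞ ε²/(αγ))^{1/3}`
is differentiable on `(0, ∞)` and satisfies `z'(t) + (2α/ε²) z(t)³ ≥ r b∞/(2γ)`
for every `t > 0`. -/
theorem stmt_7 (ε α r b_inf γ : ℝ)
    (hε : 0 < ε) (hα : 0 < α) (hr : 0 < r) (hb : 0 < b_inf) (hγ : 0 < γ)
    (z : ℝ → ℝ)
    (hz : ∀ t : ℝ, z t = ε / (2 * Real.sqrt (α * t)) +
      (r * b_inf * ε ^ 2 / (α * γ)) ^ ((1 : ℝ) / 3)) :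
    ∀ t ∈ Set.Ioi (0 : ℝ), DifferentiableAt ℝ z t ∧
      deriv z t + (2 * α / ε ^ 2) * (z t) ^ 3 ≥ r * b_inf / (2 * γ) := by
  have hzf : z = fun t => ε / (2 * Real.sqrt (α * t)) +
      (r * b_inf * ε ^ 2 / (α * γ)) ^ ((1 : ℝ) / 3) := funext hz
  subst hzf
  intro t ht
  have ht : (0 : ℝ) < t := ht
  have hat : 0 < α * t := mul_pos hα ht
  set s := Real.sqrt (α * t) with hsdef
  have hs : 0 < s := Real.sqrt_pos.mpr hat
  have hs2 : s ^ 2 = α * t := Real.sq_sqrt hat.le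
  set C : ℝ := (r * b_inf * ε ^ 2 / (α * γ)) ^ ((1 : ℝ) / 3) with hCdef
  have hx : 0 < r * b_inf * ε ^ 2 / (α * γ) := by positivity
  have hC3 : C ^ 3 = r * b_inf * ε ^ 2 / (α * γ) := by
    rw [hCdef, ← Real.rpow_natCast _ 3, ← Real.rpow_mul hx.le]
    norm_num
  have hC : 0 < C := Real.rpow_pos_of_pos hx _
  -- derivative of sqrt (α * t)
  have h1 : HasDerivAt (fun u : ℝ => Real.sqrt (α * u)) (α / (2 * s)) t := by
    have := (Real.hasDerivAt_sqrt (ne_of_gt hat)).comp t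
      ((hasDerivAt_id t).const_mul α)
    simpa [hsdef, mul_comm, div_eq_mul_inv, mul_assoc, Function.comp_def] using this
  have h2 : HasDerivAt (fun u : ℝ => ε / (2 * Real.sqrt (α * u)) + C)
      ((0 * (2 * s) - ε * (2 * (α / (2 * s)))) / (2 * s) ^ 2) t := by
    exact ((hasDerivAt_const t ε).div (h1.const_mul 2)
      (by positivity)).add_const C
  constructor
  · exact h2.differentiableAt
  · rw [h2.deriv]
    have key : ε / (2 * s) + C ≥ 0 := by positivity
    have cube : (ε / (2 * s) + C) ^ 3 ≥ (ε / (2 * s)) ^ 3 + C ^ 3 := by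
      have ha : 0 ≤ ε / (2 * s) := by positivity
      nlinarith [mul_pos hC hC, mul_nonneg ha ha, mul_nonneg (mul_nonneg ha ha) hC.le,
        mul_nonneg (mul_nonneg hC.le hC.le) ha]
    have hmain : (0 * (2 * s) - ε * (2 * (α / (2 * s)))) / (2 * s) ^ 2
        + (2 * α / ε ^ 2) * ((ε / (2 * s)) ^ 3 + C ^ 3) = 2 * (r * b_inf) / γ := by
      rw [hC3]
      field_simp
      ring
    have hineq : (2 * α / ε ^ 2) * (ε / (2 * s) + C) ^ 3
        ≥ (2 * α / ε ^ 2) * ((ε / (2 * s)) ^ 3 + C ^ 3) := by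
      apply mul_le_mul_of_nonneg_left cube (by positivity)
    have hrb : r * b_inf / (2 * γ) ≤ 2 * (r * b_inf) / γ := by
      rw [div_le_div_iff₀ (by positivity) (by positivity)]
      nlinarith [mul_pos hr hb, hγ]
    calc r * b_inf / (2 * γ) ≤ 2 * (r * b_inf) / γ := hrb
      _ = (0 * (2 * s) - ε * (2 * (α / (2 * s)))) / (2 * s) ^ 2
          + (2 * α / ε ^ 2) * ((ε / (2 * s)) ^ 3 + C ^ 3) := hmain.symm
      _ ≤ _ := by linarith [hineq]
end

section
/- Suppose n ≥ 0 everywhere, a(x, θ) ≤ a_∞ for all (x, θ), n satisfies the Neumann boundary conditions ∂_θ n(t, x, θ_m) = ∂_θ n(t, x, θ_M) = 0 for all (t, x), and n satisfies ε ∂_t n = ε² D ∂_{xx} n + α ∂_{θθ} n + r n (a(x, θ) − ρ(t, x)) for all (t, x) and all θ ∈ Θ, where ρ(t, x) := ∫_{θ_m}^{θ_M} n(t, x, θ) dθ. Assume moreover that at the point (t, x) differentiation under the integral sign is valid: ∂_t ρ(t, x) = ∫_{θ_m}^{θ_M} ∂_t n(t, x, θ) dθ and ∂_{xx} ρ(t,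 x) = ∫_{θ_m}^{θ_M} ∂_{xx} n(t, x, θ) dθ. Then ε ∂_t ρ(t, x) ≤ ε² D ∂_{xx} ρ(t, x) + r ρ(t, x) (a_∞ − ρ(t, x)). (The total density ρ is a subsolution of a Fisher-KPP equation.) -/
/-- If `n ≥ 0` solves the non-local model
`ε ∂ₜ n = ε² D ∂ₓₓ n + α ∂_θθ n + r n (a(x,θ) - ρ(t,x))` on `Θ = [θm, θM]` with
Neumann boundary conditions in `θ`, `a ≤ a∞`, and differentiation under the
integral sign is valid at the point `(t,x)`, then the total density
`ρ(t,x) = ∫_Θ n dθ` satisfies the Fisher-KPP subsolution inequality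
`ε ∂ₜ ρ ≤ ε² D ∂ₓₓ ρ + r ρ (a∞ - ρ)` at `(t,x)`. -/
theorem stmt_15 (θm θM ε D α r a_inf t x : ℝ)
    (hθ : θm < θM) (hε : 0 < ε) (hD : 0 < D) (hα : 0 < α) (hr : 0 < r)
    (a : ℝ → ℝ → ℝ) (n : ℝ → ℝ → ℝ → ℝ) (ρ : ℝ → ℝ → ℝ)
    (hρ : ∀ s y : ℝ, ρ s y = ∫ ϑ in θm..θM, n s y ϑ)
    (hn_nonneg : ∀ s y ϑ : ℝ, 0 ≤ n s y ϑ)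
    (ha : ∀ y ϑ : ℝ, a y ϑ ≤ a_inf)
    (hreg : ∀ s y : ℝ, ∃ U : Set ℝ, IsOpen U ∧ Set.Icc θm θM ⊆ U ∧
      ContDiffOn ℝ 2 (n s y) U)
    (hcont : Continuous fun p : ℝ × ℝ × ℝ => n p.1 p.2.1 p.2.2)
    (hcont_t : Continuous fun p : ℝ × ℝ × ℝ => deriv (fun s => n s p.2.1 p.2.2) p.1)
    (hcont_xx : Continuous fun p : ℝ × ℝ × ℝ =>
      deriv (deriv fun y => n p.1 y p.2.2) p.2.1)
    (hneu : ∀ s y : ℝ, deriv (n s y) θm = 0 ∧ deriv (n s y) θM = 0)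
    (hpde : ∀ s y : ℝ, ∀ ϑ ∈ Set.Icc θm θM,
      ε * deriv (fun s' => n s' y ϑ) s =
        ε ^ 2 * D * deriv (deriv fun y' => n s y' ϑ) y +
          α * deriv (deriv (n s y)) ϑ + r * n s y ϑ * (a y ϑ - ρ s y))
    (hswap_t : deriv (fun s => ρ s x) t = ∫ ϑ in θm..θM, deriv (fun s => n s x ϑ) t)
    (hswap_xx : deriv (deriv fun y => ρ t y) x =
      ∫ ϑ in θm..θM, deriv (deriv fun y => n t y ϑ) x) :
    ε * deriv (fun s => ρ s x) t ≤
      ε ^ 2 * D * deriv (deriv fun y => ρ t y) x + r * ρ t x * (a_inf - ρ t x) := by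
  obtain ⟨U, hUopen, hUsub, hU⟩ := hreg t x
  have hle : θm ≤ θM := hθ.le
  have huIcc : Set.uIcc θm θM = Set.Icc θm θM := Set.uIcc_of_le hle
  -- continuity of θ-slices
  have cont_n : Continuous fun ϑ => n t x ϑ :=
    hcont.comp (by fun_prop : Continuous fun ϑ : ℝ => ((t, x, ϑ) : ℝ × ℝ × ℝ))
  have cont_dt : Continuous fun ϑ => deriv (fun s => n s x ϑ) t :=
    hcont_t.comp (by fun_prop : Continuous fun ϑ : ℝ => ((t, x, ϑ) : ℝ × ℝ × ℝ))
  have cont_dxx : Continuous fun ϑ => deriv (deriv fun y => n t y ϑ) x :=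
    hcont_xx.comp (by fun_prop : Continuous fun ϑ : ℝ => ((t, x, ϑ) : ℝ × ℝ × ℝ))
  -- second derivative in θ
  have hC1 : ContDiffOn ℝ 1 (deriv (n t x)) U :=
    hU.deriv_of_isOpen hUopen (by norm_num)
  have hderiv2 : ∀ ϑ ∈ Set.Icc θm θM,
      HasDerivAt (deriv (n t x)) (deriv (deriv (n t x)) ϑ) ϑ := by
    intro ϑ hϑ
    exact ((hC1.contDiffAt (hUopen.mem_nhds (hUsub hϑ))).differentiableAt
      one_ne_zero).hasDerivAt
  have cont_d2 : ContinuousOn (deriv (deriv (n t x))) (Set.Icc θm θM) :=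
    (hC1.continuousOn_deriv_of_isOpen hUopen le_rfl).mono hUsub
  -- integrabilities
  have hint_dt : IntervalIntegrable (fun ϑ => deriv (fun s => n s x ϑ) t)
      MeasureTheory.volume θm θM := cont_dt.intervalIntegrable θm θM
  have hint_dxx : IntervalIntegrable (fun ϑ => deriv (deriv fun y => n t y ϑ) x)
      MeasureTheory.volume θm θM := cont_dxx.intervalIntegrable θm θM
  have hint_d2 : IntervalIntegrable (deriv (deriv (n t x)))
      MeasureTheory.volume θm θM := by
    apply ContinuousOn.intervalIntegrable
    rwa [huIcc]
  have hint_n : IntervalIntegrable (fun ϑ => n t x ϑ) MeasureTheory.volume θm θM :=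
    cont_n.intervalIntegrable θm θM
  -- the reaction term is integrable by the PDE
  have hEq : ∀ ϑ ∈ Set.Icc θm θM,
      r * n t x ϑ * (a x ϑ - ρ t x) =
        ε * deriv (fun s => n s x ϑ) t
          - ε ^ 2 * D * deriv (deriv fun y => n t y ϑ) x
          - α * deriv (deriv (n t x)) ϑ := by
    intro ϑ hϑ
    have := hpde t x ϑ hϑ
    linarith
  have hint_h : IntervalIntegrable (fun ϑ => r * n t x ϑ * (a x ϑ - ρ t x))
      MeasureTheory.volume θm θM := by
    have hGint : IntervalIntegrable (fun ϑ =>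
        ε * deriv (fun s => n s x ϑ) t
          - ε ^ 2 * D * deriv (deriv fun y => n t y ϑ) x
          - α * deriv (deriv (n t x)) ϑ) MeasureTheory.volume θm θM :=
      ((hint_dt.const_mul ε).sub (hint_dxx.const_mul (ε ^ 2 * D))).sub
        (hint_d2.const_mul α)
    rw [intervalIntegrable_iff_integrableOn_Icc_of_le hle] at hGint ⊢
    exact hGint.congr_fun (fun ϑ hϑ => (hEq ϑ hϑ).symm) measurableSet_Icc
  -- ∫ α ∂θθ n = 0
  have hI0 : (∫ ϑ in θm..θM, deriv (deriv (n t x)) ϑ) = 0 := by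
    rw [intervalIntegral.integral_deriv_eq_sub
      (fun ϑ hϑ => (hderiv2 ϑ (huIcc ▸ hϑ)).differentiableAt)
      hint_d2, (hneu t x).1, (hneu t x).2, sub_zero]
  -- main computation
  have key : ε * deriv (fun s => ρ s x) t =
      ε ^ 2 * D * deriv (deriv fun y => ρ t y) x
        + (∫ ϑ in θm..θM, r * n t x ϑ * (a x ϑ - ρ t x)) := by
    rw [hswap_t, ← intervalIntegral.integral_const_mul]
    have : (∫ ϑ in θm..θM, ε * deriv (fun s => n s x ϑ) t) =
        ∫ ϑ in θm..θM,
          (ε ^ 2 * D * deriv (deriv fun y => n t y ϑ) x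
            + α * deriv (deriv (n t x)) ϑ
            + r * n t x ϑ * (a x ϑ - ρ t x)) := by
      apply intervalIntegral.integral_congr
      intro ϑ hϑ
      exact hpde t x ϑ (huIcc ▸ hϑ)
    rw [this, intervalIntegral.integral_add ((hint_dxx.const_mul _).add
      (hint_d2.const_mul α)) hint_h,
      intervalIntegral.integral_add (hint_dxx.const_mul _) (hint_d2.const_mul α),
      intervalIntegral.integral_const_mul, intervalIntegral.integral_const_mul,
      hI0, hswap_xx]
    ring
  -- bound the reaction integral
  have hbound : (∫ ϑ in θm..θM, r * n t x ϑ * (a x ϑ - ρ t x)) ≤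
      r * ρ t x * (a_inf - ρ t x) := by
    have hmono : (∫ ϑ in θm..θM, r * n t x ϑ * (a x ϑ - ρ t x)) ≤
        ∫ ϑ in θm..θM, r * (a_inf - ρ t x) * n t x ϑ := by
      apply intervalIntegral.integral_mono_on hle hint_h (hint_n.const_mul _)
      intro ϑ hϑ
      have h1 := ha x ϑ
      have h2 := hn_nonneg t x ϑ
      nlinarith [mul_nonneg (mul_nonneg hr.le h2) (sub_nonneg.2 h1)]
    calc (∫ ϑ in θm..θM, r * n t x ϑ * (a x ϑ - ρ t x))
        ≤ ∫ ϑ in θm..θM, r * (a_inf - ρ t x) * n t x ϑ := hmono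
      _ = r * (a_inf - ρ t x) * ρ t x := by
          rw [intervalIntegral.integral_const_mul, hρ t x]
      _ = r * ρ t x * (a_inf - ρ t x) := by ring
  linarith [key, hbound]
end
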